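/- Drift in the gap region of Jump_m. Let n ≥ 2 and let m be an integer with 1 < m < n/2, and define the potential d : {0,1}^n → ℝ by d(x*) = 0 and d(x) = |n − m − ‖x‖₁| for x ≠ x*. Consider the MMAHH with acceptance operators OI and AM on f = Jump_m, with p, q ∈ (0,1). Then for every t ≥ 0, every x ∈ {0,1}^n with n − m < ‖x‖₁ < n, and every s ∈ {OI, AM}: E[d(x_t) − d(x_{t+1}) | x_t = x, s_t = s] ≥ 2·d(x)/n. -/

import Mathlib

open MeasureTheory
open scoped ENNReal NNReal

namespace MMAHHStmt

/-- The two acceptance operators. -/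
inductive Op : Type
  | OI : Op
  | AM : Op
  deriving DecidableEq

instance : MeasurableSpace Op := ⊤

/-- Search points: bit-strings of length `n`. -/
abbrev Point (n : ℕ) := Fin n → Bool

/-- The number of one-bits of a bit-string. -/
def ones {n : ℕ} (x : Point n) : ℕ := (Finset.univ.filter fun i => x i = true).card

/-- The all-ones string, the global optimum of all benchmarks considered. -/
def optimum (n : ℕ) : Point n := fun _ => true

/-- Flipping the bit in position `v`. -/
def flipBit {n : ℕ} (x : Point n) (v : Fin n) : Point n := Function.update x v (!(x v))

open Classical in
/-- The search point obtained from `x` by proposing to flip bit `v` and applying the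
acceptance operator `op` for the objective function `f`. -/
noncomputable def movedPoint {n : ℕ} (f : Point n → ℝ) (op : Op) (x : Point n) (v : Fin n) :
    Point n :=
  match op with
  | Op.OI => if f x < f (flipBit x v) then flipBit x v else x
  | Op.AM => flipBit x v

open Classical in
/-- One-step transition probability of the search point under acceptance operator `op`:
a uniformly random bit is flipped and the move is accepted or rejected according to `op`. -/
noncomputable def moveProb {n : ℕ} (f : Point n → ℝ) (op : Op) (x x' : Point n) : ℝ≥0∞ :=
  ((Finset.univ.filter fun v => movedPoint f op x v = x').card : ℝ≥0∞) / n

/-- Transition probabilities of the two-state Markov chain on the acceptance operators. -/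
noncomputable def switchProb (p q : ℝ) : Op → Op → ℝ≥0∞
  | Op.OI, Op.OI => ENNReal.ofReal (1 - p)
  | Op.OI, Op.AM => ENNReal.ofReal p
  | Op.AM, Op.OI => ENNReal.ofReal q
  | Op.AM, Op.AM => ENNReal.ofReal (1 - q)

/-- One-step transition probabilities of the MMAHH on the state space
`Point n × Op`: the search point moves according to the current acceptance operator, and,
independently, the operator switches according to the two-state Markov chain. -/
noncomputable def mmahhTrans {n : ℕ} (f : Point n → ℝ) (p q : ℝ) :
    Point n × Op → Point n × Op → ℝ≥0∞ :=
  fun s s' => moveProb f s.2 s.1 s'.1 * switchProb p q s.2 s'.2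

/-- `X` is (a version of) the MMAHH Markov chain with objective function `f` and switching
probabilities `p` and `q`, under the measure `μ`: each `X t` is measurable, and conditionally
on any history, the next state is distributed according to `mmahhTrans`. -/
def IsMMAHH {n : ℕ} {Ω : Type*} [MeasurableSpace Ω] (μ : Measure Ω)
    (X : ℕ → Ω → Point n × Op) (f : Point n → ℝ) (p q : ℝ) : Prop :=
  (∀ t, Measurable (X t)) ∧
  ∀ (t : ℕ) (σ : ℕ → Point n × Op) (s' : Point n × Op),
    μ {ω | (∀ i ≤ t, X i ω = σ i) ∧ X (t + 1) ω = s'}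
      = μ {ω | ∀ i ≤ t, X i ω = σ i} * mmahhTrans f p q (σ t) s'

/-- The runtime: the first hitting time of the global optimum, as an extended natural number
(`⊤` if the optimum is never reached). -/
noncomputable def hitTime {n : ℕ} {Ω : Type*} (X : ℕ → Ω → Point n × Op) (ω : Ω) : ℕ∞ :=
  ⨅ t ∈ {t : ℕ | (X t ω).1 = optimum n}, (t : ℕ∞)

/-- The `k`-th switching time between the two acceptance operators (with junk value given by
`Nat.sInf ∅ = 0` on the probability-zero event that no further switch occurs). -/
noncomputable def switchTime {n : ℕ} {Ω : Type*} (X : ℕ → Ω → Point n × Op) : ℕ → Ω → ℕ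
  | 0, _ => 0
  | k + 1, ω =>
      sInf {t : ℕ | switchTime X k ω ≤ t ∧ (X t ω).2 ≠ (X (switchTime X k ω) ω).2}

/-- The Jump benchmark with gap parameter `m`. -/
noncomputable def Jump (n m : ℕ) (x : Point n) : ℝ :=
  if ones x ≤ n - m ∨ ones x = n then (m : ℝ) + (ones x : ℝ) else (n : ℝ) - (ones x : ℝ)

/-- The potential used in the gap region of `Jump_m`. -/
noncomputable def gapPotential (n m : ℕ) (x : Point n) : ℝ :=
  if x = optimum n then 0 else |(n : ℝ) - (m : ℝ) - (ones x : ℝ)|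

open Finset in
lemma ones_le {n : ℕ} (x : Point n) : ones x ≤ n := by
  simpa [ones] using (Finset.card_filter_le Finset.univ fun i => x i = true)

open Finset in
lemma ones_optimum (n : ℕ) : ones (optimum n) = n := by
  simp [ones, optimum]

open Finset in
lemma eq_optimum_of_ones {n : ℕ} {x : Point n} (h : ones x = n) : x = optimum n := by
  have : (Finset.univ.filter fun i => x i = true) = Finset.univ := by
    apply Finset.eq_univ_of_card
    simpa [ones] using h
  funext i
  have := Finset.mem_filter.mp (this ▸ Finset.mem_univ i)
  simpa [optimum] using this.2

lemma ones_flip_true {n : ℕ} {x : Point n} {v : Fin n} (h : x v = true) :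
    ones (flipBit x v) + 1 = ones x := by
  classical
  have hset : (Finset.univ.filter fun i => flipBit x v i = true)
      = (Finset.univ.filter fun i => x i = true).erase v := by
    ext i
    by_cases hiv : i = v <;>
      simp [flipBit, Function.update, hiv, h]
  have hv : v ∈ Finset.univ.filter fun i => x i = true := by simp [h]
  simp only [ones, hset]
  rw [Finset.card_erase_of_mem hv]
  have : 1 ≤ (Finset.univ.filter fun i => x i = true).card := Finset.card_pos.mpr ⟨v, hv⟩
  omega

lemma ones_flip_false {n : ℕ} {x : Point n} {v : Fin n} (h : x v = false) :
    ones (flipBit x v) = ones x + 1 := by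
  classical
  have hvm : v ∉ Finset.univ.filter fun i => x i = true := by simp [h]
  have hset : (Finset.univ.filter fun i => flipBit x v i = true)
      = insert v (Finset.univ.filter fun i => x i = true) := by
    ext i
    by_cases hiv : i = v <;>
      simp [flipBit, Function.update, hiv, h]
  simp only [ones, hset]
  rw [Finset.card_insert_of_notMem hvm]
lemma gap_val {n m : ℕ} {x : Point n} (h2 : ones x < n) :
    gapPotential n m x = |(n : ℝ) - (m : ℝ) - (ones x : ℝ)| := by
  rw [gapPotential, if_neg]
  intro h
  rw [h, ones_optimum] at h2
  omega

lemma gap_val_of_ge {n m : ℕ} {x : Point n} (h2 : ones x < n) (h1 : n - m ≤ ones x)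
    (hmn : m ≤ n) :
    gapPotential n m x = (ones x : ℝ) - ((n : ℝ) - (m : ℝ)) := by
  rw [gap_val h2]
  have : ((n - m : ℕ) : ℝ) ≤ (ones x : ℝ) := by exact_mod_cast h1
  rw [Nat.cast_sub hmn] at this
  rw [abs_of_nonpos (by linarith)]
  ring

lemma moved_true {n m : ℕ} (hn : 2 ≤ n) (hm1 : 1 < m) (hm2 : 2 * m < n) {x : Point n}
    (hx1 : n - m < ones x) (hx2 : ones x < n) (op : Op) {v : Fin n} (hv : x v = true) :
    gapPotential n m (movedPoint (Jump n m) op x v) = gapPotential n m x - 1 := by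
  have hmn : m ≤ n := by omega
  have hof : ones (flipBit x v) + 1 = ones x := ones_flip_true hv
  have hKn : ((n - m : ℕ) : ℝ) = (n : ℝ) - m := by
    rw [Nat.cast_sub hmn]
  have hK1 : ((n : ℝ) - m) + 1 ≤ (ones x : ℝ) := by
    have : n - m + 1 ≤ ones x := hx1
    have := (Nat.cast_le (α := ℝ)).mpr this
    push_cast at this
    linarith [hKn ▸ this]
  have hKlt : (ones x : ℝ) < n := by exact_mod_cast hx2
  have hjx : Jump n m x = (n : ℝ) - (ones x : ℝ) := by
    rw [Jump, if_neg]; omega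
  have honesflip : (ones (flipBit x v) : ℝ) = (ones x : ℝ) - 1 := by
    have : ((ones (flipBit x v) + 1 : ℕ) : ℝ) = ((ones x : ℕ) : ℝ) := by exact_mod_cast congrArg Nat.cast hof
    push_cast at this
    linarith
  have hjf : (n : ℝ) - (ones x : ℝ) < Jump n m (flipBit x v) := by
    rw [Jump]
    split
    · rw [honesflip]
      nlinarith
    · rw [honesflip]
      linarith
  have hflt : ones (flipBit x v) < n := by omega
  have hfge : n - m ≤ ones (flipBit x v) := by omega
  have hacc : Jump n m x < Jump n m (flipBit x v) := by rw [hjx]; exact hjf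
  have hmoved : movedPoint (Jump n m) op x v = flipBit x v := by
    cases op <;> simp [movedPoint, hacc]
  rw [hmoved, gap_val_of_ge hflt hfge hmn, gap_val_of_ge (by omega) (by omega) hmn,
    honesflip]
  ring

lemma moved_false_top {n m : ℕ} (hn : 2 ≤ n) (hm1 : 1 < m) (hm2 : 2 * m < n) {x : Point n}
    (hx1 : n - m < ones x) (hx2 : ones x = n - 1) (op : Op) {v : Fin n} (hv : x v = false) :
    gapPotential n m (movedPoint (Jump n m) op x v) = 0 := by
  have hof : ones (flipBit x v) = ones x + 1 := ones_flip_false hv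
  have hofn : ones (flipBit x v) = n := by omega
  have hopt : flipBit x v = optimum n := eq_optimum_of_ones hofn
  have hjx : Jump n m x = (n : ℝ) - (ones x : ℝ) := by
    rw [Jump, if_neg]; omega
  have hjf : Jump n m (flipBit x v) = (m : ℝ) + (ones (flipBit x v) : ℝ) := by
    rw [Jump, if_pos (Or.inr hofn)]
  have hacc : Jump n m x < Jump n m (flipBit x v) := by
    rw [hjx, hjf, hofn]
    have h1 : (1:ℝ) ≤ (ones x : ℝ) := by
      have : 1 ≤ ones x := by omega
      exact_mod_cast this
    have : (0:ℝ) < m := by exact_mod_cast (by omega : 0 < m)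
    linarith
  have hmoved : movedPoint (Jump n m) op x v = flipBit x v := by
    cases op <;> simp [movedPoint, hacc]
  rw [hmoved, hopt, gapPotential, if_pos rfl]

lemma moved_false_mid_OI {n m : ℕ} (hn : 2 ≤ n) (hm1 : 1 < m) (hm2 : 2 * m < n) {x : Point n}
    (hx1 : n - m < ones x) (hx2 : ones x < n - 1) {v : Fin n} (hv : x v = false) :
    movedPoint (Jump n m) Op.OI x v = x := by
  have hof : ones (flipBit x v) = ones x + 1 := ones_flip_false hv
  have hjx : Jump n m x = (n : ℝ) - (ones x : ℝ) := by
    rw [Jump, if_neg]; omega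
  have hjf : Jump n m (flipBit x v) = (n : ℝ) - (ones (flipBit x v) : ℝ) := by
    rw [Jump, if_neg]; omega
  have : ¬ Jump n m x < Jump n m (flipBit x v) := by
    rw [hjx, hjf, hof]
    push_cast
    linarith
  simp [movedPoint, this]

lemma moved_false_AM {n m : ℕ} (hn : 2 ≤ n) (hm1 : 1 < m) (hm2 : 2 * m < n) {x : Point n}
    (hx1 : n - m < ones x) (hx2 : ones x < n - 1) {v : Fin n} (hv : x v = false) :
    gapPotential n m (movedPoint (Jump n m) Op.AM x v) = gapPotential n m x + 1 := by
  have hmn : m ≤ n := by omega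
  have hof : ones (flipBit x v) = ones x + 1 := ones_flip_false hv
  have hmoved : movedPoint (Jump n m) Op.AM x v = flipBit x v := rfl
  rw [hmoved, gap_val_of_ge (by omega) (by omega) hmn,
    gap_val_of_ge (by omega) (by omega) hmn, hof]
  push_cast
  ring
lemma sum_drift (n m : ℕ) (hn : 2 ≤ n) (hm1 : 1 < m) (hm2 : 2 * m < n) (x : Point n)
    (hx1 : n - m < ones x) (hx2 : ones x < n) (op : Op) :
    2 * gapPotential n m x ≤
      ∑ v : Fin n, (gapPotential n m x - gapPotential n m (movedPoint (Jump n m) op x v)) := by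
  have hmn : m ≤ n := by omega
  have hd : gapPotential n m x = (ones x : ℝ) - ((n : ℝ) - m) :=
    gap_val_of_ge hx2 (le_of_lt hx1) hmn
  have hm2R : 2 * (m : ℝ) < n := by exact_mod_cast hm2
  have hKlt : (ones x : ℝ) < n := by exact_mod_cast hx2
  have hK1 : ((n : ℝ) - m) + 1 ≤ (ones x : ℝ) := by
    have h : n - m + 1 ≤ ones x := hx1
    have h2 := (Nat.cast_le (α := ℝ)).mpr h
    push_cast [Nat.cast_sub hmn] at h2
    linarith
  have hcards : (Finset.univ.filter fun v : Fin n => x v = true).card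
      + (Finset.univ.filter fun v : Fin n => ¬ x v = true).card = n := by
    rw [Finset.card_filter_add_card_filter_not]
    simp
  have hcard1 : (Finset.univ.filter fun v : Fin n => x v = true).card = ones x := rfl
  rw [← Finset.sum_filter_add_sum_filter_not Finset.univ (fun v => x v = true)]
  have h1 : (∑ v ∈ Finset.univ.filter (fun v : Fin n => x v = true),
      (gapPotential n m x - gapPotential n m (movedPoint (Jump n m) op x v)))
      = ((ones x : ℕ) : ℝ) := by
    rw [Finset.sum_congr rfl (fun v hv => ?_), Finset.sum_const, nsmul_eq_mul, hcard1,
      mul_one]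
    have hv' := (Finset.mem_filter.mp hv).2
    rw [moved_true hn hm1 hm2 hx1 hx2 op hv']
    ring
  rw [h1]
  by_cases htop : ones x = n - 1
  · have h2 : (∑ v ∈ Finset.univ.filter (fun v : Fin n => ¬ x v = true),
        (gapPotential n m x - gapPotential n m (movedPoint (Jump n m) op x v)))
        = ((n - ones x : ℕ) : ℝ) * gapPotential n m x := by
      have hterm : ∀ v ∈ Finset.univ.filter (fun v : Fin n => ¬ x v = true),
          (gapPotential n m x - gapPotential n m (movedPoint (Jump n m) op x v))
          = gapPotential n m x := by
        intro v hv
        have hv' : x v = false := by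
          simpa using (Finset.mem_filter.mp hv).2
        rw [moved_false_top hn hm1 hm2 hx1 htop op hv']
        ring
      rw [Finset.sum_congr rfl hterm, Finset.sum_const, nsmul_eq_mul]
      congr 2
      omega
    rw [h2]
    have hnK : ((n - ones x : ℕ) : ℝ) = 1 := by
      have : n - ones x = 1 := by omega
      rw [this]; norm_num
    rw [hnK, one_mul]
    have : ((n:ℝ) - 1) ≤ (ones x : ℝ) := by
      have : n - 1 ≤ ones x := by omega
      have h2 := (Nat.cast_le (α := ℝ)).mpr this
      push_cast [Nat.cast_sub (by omega : 1 ≤ n)] at h2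
      linarith
    have hmR : (m:ℝ) ≤ n := by exact_mod_cast hmn
    linarith
  · have hmid : ones x < n - 1 := by omega
    have hnK : ((n - ones x : ℕ) : ℝ) = (n : ℝ) - ones x := by
      push_cast [Nat.cast_sub (ones_le x)]; ring
    cases op with
    | OI =>
      have h2 : (∑ v ∈ Finset.univ.filter (fun v : Fin n => ¬ x v = true),
          (gapPotential n m x - gapPotential n m (movedPoint (Jump n m) Op.OI x v))) = 0 := by
        apply Finset.sum_eq_zero
        intro v hv
        have hv' : x v = false := by simpa using (Finset.mem_filter.mp hv).2
        rw [moved_false_mid_OI hn hm1 hm2 hx1 hmid hv']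
        ring
      rw [h2]
      linarith
    | AM =>
      have hterm : ∀ v ∈ Finset.univ.filter (fun v : Fin n => ¬ x v = true),
          (gapPotential n m x - gapPotential n m (movedPoint (Jump n m) Op.AM x v))
          = -1 := by
        intro v hv
        have hv' : x v = false := by simpa using (Finset.mem_filter.mp hv).2
        rw [moved_false_AM hn hm1 hm2 hx1 hmid hv']
        ring
      have h2 : (∑ v ∈ Finset.univ.filter (fun v : Fin n => ¬ x v = true),
          (gapPotential n m x - gapPotential n m (movedPoint (Jump n m) Op.AM x v)))
          = -(((n - ones x : ℕ) : ℝ)) := by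
        rw [Finset.sum_congr rfl hterm, Finset.sum_const, nsmul_eq_mul]
        have : (Finset.univ.filter fun v : Fin n => ¬ x v = true).card = n - ones x := by
          omega
        rw [this]; ring
      rw [h2, hnK]
      linarith
instance : Fintype Op :=
  ⟨{Op.OI, Op.AM}, fun x => by cases x <;> simp⟩

instance : MeasurableSingletonClass Op :=
  ⟨fun _ => trivial⟩

lemma op_sum (f : Op → ℝ) : ∑ b : Op, f b = f Op.OI + f Op.AM := by
  rw [show (Finset.univ : Finset Op) = {Op.OI, Op.AM} from rfl,
    Finset.sum_insert (by decide), Finset.sum_singleton]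

lemma meas_singleton {n : ℕ} (z : Point n × Op) : MeasurableSet {z} := by
  have : ({z} : Set (Point n × Op)) = Prod.fst ⁻¹' {z.1} ∩ Prod.snd ⁻¹' {z.2} := by
    ext w
    simp [Prod.ext_iff]
  rw [this]
  exact (measurable_fst (measurableSet_singleton z.1)).inter
    (measurable_snd (measurableSet_singleton z.2))

lemma step_trans {n : ℕ} {Ω : Type*} [MeasurableSpace Ω] {μ : Measure Ω}
    {X : ℕ → Ω → Point n × Op} {f : Point n → ℝ} {p q : ℝ}
    (hchain : IsMMAHH μ X f p q) (t : ℕ) (z s' : Point n × Op) :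
    μ ({ω | X t ω = z} ∩ {ω | X (t + 1) ω = s'})
      = μ {ω | X t ω = z} * mmahhTrans f p q z s' := by
  classical
  let S := Point n × Op
  set σ : (Fin (t + 1) → S) → ℕ → S :=
    fun g i => if h : i < t + 1 then g ⟨i, h⟩ else z with hσ
  set B : (Fin (t + 1) → S) → Set Ω :=
    fun g => {ω | ∀ i ≤ t, X i ω = σ g i} with hB
  set G : Finset (Fin (t + 1) → S) :=
    Finset.univ.filter (fun g => g ⟨t, Nat.lt_succ_self t⟩ = z) with hG
  have hBmeas : ∀ g, MeasurableSet (B g) := by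
    intro g
    have : B g = ⋂ i, ⋂ (_ : i ≤ t), X i ⁻¹' {σ g i} := by
      ext ω; simp [hB, Set.mem_iInter]
    rw [this]
    exact MeasurableSet.iInter fun i => MeasurableSet.iInter fun _ =>
      (hchain.1 i) (meas_singleton _)
  have hCmeas : MeasurableSet {ω | X (t + 1) ω = s'} := (hchain.1 (t + 1)) (meas_singleton s')
  have hunion : {ω | X t ω = z} = ⋃ g ∈ G, B g := by
    ext ω
    constructor
    · intro hω
      refine Set.mem_iUnion₂.mpr ⟨fun i : Fin (t + 1) => X i ω, ?_, ?_⟩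
      · simp only [hG, Finset.mem_filter, Finset.mem_univ, true_and]
        exact hω
      · intro i hi
        simp only [hσ]
        rw [dif_pos (by omega : i < t + 1)]
    · intro hω
      obtain ⟨g, hgG, hgB⟩ := Set.mem_iUnion₂.mp hω
      have hgz : g ⟨t, Nat.lt_succ_self t⟩ = z := (Finset.mem_filter.mp hgG).2
      have := hgB t le_rfl
      simp only [hσ] at this
      rw [dif_pos (Nat.lt_succ_self t)] at this
      show X t ω = z
      rw [this, hgz]
  have hdisj : (G : Set (Fin (t + 1) → S)).PairwiseDisjoint B := by
    intro g _ g' _ hne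
    refine Set.disjoint_left.mpr fun ω hg hg' => hne ?_
    funext j
    have h1 := hg j.1 (by omega)
    have h2 := hg' j.1 (by omega)
    simp only [hσ] at h1 h2
    rw [dif_pos j.2] at h1 h2
    rw [Fin.eta] at h1 h2
    rw [← h1, ← h2]
  have hBC : ∀ g ∈ G, μ (B g ∩ {ω | X (t + 1) ω = s'}) = μ (B g) * mmahhTrans f p q z s' := by
    intro g hgG
    have hgz : g ⟨t, Nat.lt_succ_self t⟩ = z := (Finset.mem_filter.mp hgG).2
    have hset : B g ∩ {ω | X (t + 1) ω = s'}
        = {ω | (∀ i ≤ t, X i ω = σ g i) ∧ X (t + 1) ω = s'} := by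
      ext ω; simp [hB, Set.mem_inter_iff, Set.mem_setOf_eq]
    have hσt : σ g t = z := by
      simp only [hσ]; rw [dif_pos (Nat.lt_succ_self t)]; exact hgz
    rw [hset, hchain.2 t (σ g) s', hσt]
  calc μ ({ω | X t ω = z} ∩ {ω | X (t + 1) ω = s'})
      = μ (⋃ g ∈ G, (B g ∩ {ω | X (t + 1) ω = s'})) := by
        rw [hunion, Set.iUnion₂_inter]
    _ = ∑ g ∈ G, μ (B g ∩ {ω | X (t + 1) ω = s'}) := by
        refine measure_biUnion_finset ?_ (fun g _ => (hBmeas g).inter hCmeas)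
        exact fun g hg g' hg' hne =>
          (hdisj hg hg' hne).mono Set.inter_subset_left Set.inter_subset_left
    _ = ∑ g ∈ G, μ (B g) * mmahhTrans f p q z s' := Finset.sum_congr rfl hBC
    _ = (∑ g ∈ G, μ (B g)) * mmahhTrans f p q z s' := by rw [Finset.sum_mul]
    _ = μ {ω | X t ω = z} * mmahhTrans f p q z s' := by
        rw [hunion, measure_biUnion_finset hdisj (fun g _ => hBmeas g)]
lemma switch_sum (p q : ℝ) (hp0 : 0 < p) (hp1 : p < 1) (hq0 : 0 < q) (hq1 : q < 1) (s : Op) :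
    ∑ b : Op, (switchProb p q s b).toReal = 1 := by
  cases s <;>
    rw [op_sum] <;>
    simp only [switchProb] <;>
    rw [ENNReal.toReal_ofReal (by linarith), ENNReal.toReal_ofReal (by linarith)] <;>
    ring

lemma sum_trans_bound (n m : ℕ) (hn : 2 ≤ n) (hm1 : 1 < m) (hm2 : 2 * m < n)
    (p q : ℝ) (hp0 : 0 < p) (hp1 : p < 1) (hq0 : 0 < q) (hq1 : q < 1)
    (x : Point n) (hx1 : n - m < ones x) (hx2 : ones x < n) (s : Op) :
    2 * gapPotential n m x / (n : ℝ) ≤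
      ∑ z : Point n × Op, (mmahhTrans (Jump n m) p q (x, s) z).toReal *
        (gapPotential n m x - gapPotential n m z.1) := by
  classical
  have hn0 : (0:ℝ) < n := by positivity
  rw [Fintype.sum_prod_type]
  have hinner : ∀ a : Point n,
      ∑ b : Op, (mmahhTrans (Jump n m) p q (x, s) (a, b)).toReal *
        (gapPotential n m x - gapPotential n m a)
      = (moveProb (Jump n m) s x a).toReal * (gapPotential n m x - gapPotential n m a) := by
    intro a
    have : ∀ b : Op, (mmahhTrans (Jump n m) p q (x, s) (a, b)).toReal *
        (gapPotential n m x - gapPotential n m a)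
        = (moveProb (Jump n m) s x a).toReal *
            (gapPotential n m x - gapPotential n m a) * (switchProb p q s b).toReal := by
      intro b
      simp only [mmahhTrans, ENNReal.toReal_mul]
      ring
    rw [Finset.sum_congr rfl (fun b _ => this b), ← Finset.mul_sum,
      switch_sum p q hp0 hp1 hq0 hq1 s, mul_one]
  rw [Finset.sum_congr rfl (fun a _ => hinner a)]
  have hmove : ∀ a : Point n, (moveProb (Jump n m) s x a).toReal
      = ((Finset.univ.filter fun v => movedPoint (Jump n m) s x v = a).card : ℝ) / n := by
    intro a
    rw [moveProb, ENNReal.toReal_div]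
    norm_num
  have hfiber : ∀ a : Point n,
      ((Finset.univ.filter fun v => movedPoint (Jump n m) s x v = a).card : ℝ) *
        (gapPotential n m x - gapPotential n m a)
      = ∑ v ∈ Finset.univ.filter (fun v => movedPoint (Jump n m) s x v = a),
          (gapPotential n m x - gapPotential n m (movedPoint (Jump n m) s x v)) := by
    intro a
    rw [Finset.sum_congr rfl (fun v hv => by rw [(Finset.mem_filter.mp hv).2]),
      Finset.sum_const, nsmul_eq_mul]
  have hsum : ∑ a : Point n, (moveProb (Jump n m) s x a).toReal *
      (gapPotential n m x - gapPotential n m a)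
      = (∑ v : Fin n, (gapPotential n m x - gapPotential n m (movedPoint (Jump n m) s x v)))
        / n := by
    have : ∀ a : Point n, (moveProb (Jump n m) s x a).toReal *
        (gapPotential n m x - gapPotential n m a)
        = (∑ v ∈ Finset.univ.filter (fun v => movedPoint (Jump n m) s x v = a),
            (gapPotential n m x - gapPotential n m (movedPoint (Jump n m) s x v))) / n := by
      intro a
      rw [hmove a, div_mul_eq_mul_div, hfiber a]
    rw [Finset.sum_congr rfl (fun a _ => this a), ← Finset.sum_div,
      Finset.sum_fiberwise_of_maps_to (fun v _ => Finset.mem_univ _)]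
  rw [hsum]
  rw [div_le_div_iff_of_pos_right hn0]
  exact sum_drift n m hn hm1 hm2 x hx1 hx2 s
/-- Drift in the gap region of `Jump_m` (Lemma 9 of the paper). -/
theorem drift_gap_region (n m : ℕ) (hn : 2 ≤ n) (hm1 : 1 < m) (hm2 : 2 * m < n)
    (p q : ℝ) (hp0 : 0 < p) (hp1 : p < 1) (hq0 : 0 < q) (hq1 : q < 1)
    (Ω : Type) [MeasurableSpace Ω] (μ : Measure Ω) (X : ℕ → Ω → Point n × Op)
    (hprob : IsProbabilityMeasure μ) (hchain : IsMMAHH μ X (Jump n m) p q)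
    (t : ℕ) (x : Point n) (hx1 : n - m < ones x) (hx2 : ones x < n) (s : Op)
    (hpos : μ {ω | X t ω = (x, s)} ≠ 0) :
    2 * gapPotential n m x / (n : ℝ) ≤
      ∫ ω, (gapPotential n m (X t ω).1 - gapPotential n m (X (t + 1) ω).1)
        ∂(ProbabilityTheory.cond μ {ω | X t ω = (x, s)}) := by
  classical
  set A : Set Ω := {ω | X t ω = (x, s)} with hA
  have hAmeas : MeasurableSet A := (hchain.1 t) (meas_singleton (x, s))
  have hμAtop : μ A ≠ ⊤ := measure_ne_top μ A
  set ν := ProbabilityTheory.cond μ A with hν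
  have hprobν : IsProbabilityMeasure ν := ProbabilityTheory.cond_isProbabilityMeasure hpos
  have hCmeas : ∀ z : Point n × Op, MeasurableSet (X (t + 1) ⁻¹' {z}) :=
    fun z => (hchain.1 (t + 1)) (meas_singleton z)
  have hνval : ∀ z : Point n × Op,
      ν (X (t + 1) ⁻¹' {z}) = mmahhTrans (Jump n m) p q (x, s) z := by
    intro z
    have hpre : X (t + 1) ⁻¹' {z} = {ω | X (t + 1) ω = z} := rfl
    rw [hν, ProbabilityTheory.cond_apply hAmeas, hpre, hA,
      step_trans hchain t (x, s) z, ← mul_assoc,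
      ENNReal.inv_mul_cancel hpos hμAtop, one_mul]
  have hae : ∀ᵐ ω ∂ν, ω ∈ A := by
    have h0 : ν Aᶜ = 0 := by
      rw [hν, ProbabilityTheory.cond_apply hAmeas]
      simp
    rw [MeasureTheory.ae_iff]
    exact h0
  have hfun : (fun ω => gapPotential n m (X t ω).1 - gapPotential n m (X (t + 1) ω).1)
      =ᵐ[ν] fun ω => ∑ z : Point n × Op,
        Set.indicator (X (t + 1) ⁻¹' {z})
          (fun _ => gapPotential n m x - gapPotential n m z.1) ω := by
    filter_upwards [hae] with ω hω
    have hxt : X t ω = (x, s) := hω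
    have hsum := Finset.sum_eq_single_of_mem (s := Finset.univ)
      (f := fun z : Point n × Op => (X (t + 1) ⁻¹' {z}).indicator
        (fun _ => gapPotential n m x - gapPotential n m z.1) ω)
      (X (t + 1) ω) (Finset.mem_univ _)
      (fun z _ hz => by
        apply Set.indicator_of_notMem
        intro hmem
        exact hz (Set.mem_singleton_iff.mp hmem).symm)
    rw [hsum]
    beta_reduce
    have hmem : ω ∈ X (t + 1) ⁻¹' {X (t + 1) ω} := rfl
    rw [Set.indicator_of_mem hmem, hxt]
  rw [integral_congr_ae hfun,
    integral_finset_sum _ (fun z _ => (integrable_const _).indicator (hCmeas z))]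
  have hint : ∀ z : Point n × Op,
      ∫ ω, Set.indicator (X (t + 1) ⁻¹' {z})
          (fun _ => gapPotential n m x - gapPotential n m z.1) ω ∂ν
      = (mmahhTrans (Jump n m) p q (x, s) z).toReal *
          (gapPotential n m x - gapPotential n m z.1) := by
    intro z
    rw [integral_indicator_const _ (hCmeas z), measureReal_def, hνval z, smul_eq_mul]
  rw [Finset.sum_congr rfl (fun z _ => hint z)]
  exact sum_trans_bound n m hn hm1 hm2 p q hp0 hp1 hq0 hq1 x hx1 hx2 s
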